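/- arXiv:0712.2172 — 2 statements merged into one kernel-verified Lean document; each statement's English description precedes it below -/
import Mathlib

section
/- The spaces of lifted functions associated to distinct translated fractional ideals are linearly independent: if J_1,…,J_n are pairwise distinct translated fractional ideals, J_i = a_i + t(γ_i)O_F, and f_1,…,f_n ∈ 𝓛 are such that ∑_{i=1}^n f_i^{a_i,γ_i} = 0 as a function on F, then f_i = 0 for every i. -/
noncomputable section

open MeasureTheory

/-- A field `F` with a split valuation `ν : F^× → Γ` (split by `t`), with residue field `k`,
residue map `ρ : O_F → k`, where `Γ` has a minimal positive element `one`. -/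
structure LiftSetup (Γ F k : Type*) [AddCommGroup Γ] [LinearOrder Γ] [IsOrderedAddMonoid Γ] [Field F] [Field k] where
  /-- the valuation (recorded on nonzero elements) -/
  ν : F → Γ
  /-- the splitting homomorphism `t : Γ → F^×` -/
  t : Γ → F
  /-- the residue map (recorded on the valuation ring) -/
  ρ : F → k
  /-- the minimal positive element of `Γ` -/
  one : Γ
  one_pos : 0 < one
  one_min : ∀ γ : Γ, 0 < γ → one ≤ γ
  ν_mul : ∀ x y : F, x ≠ 0 → y ≠ 0 → ν (x * y) = ν x + ν y
  ν_add : ∀ x y : F, x ≠ 0 → y ≠ 0 → x + y ≠ 0 → min (ν x) (ν y) ≤ ν (x + y)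
  t_ne : ∀ γ : Γ, t γ ≠ 0
  t_add : ∀ γ δ : Γ, t (γ + δ) = t γ * t δ
  ν_t : ∀ γ : Γ, ν (t γ) = γ
  ρ_add : ∀ x y : F, (x = 0 ∨ 0 ≤ ν x) → (y = 0 ∨ 0 ≤ ν y) → ρ (x + y) = ρ x + ρ y
  ρ_mul : ∀ x y : F, (x = 0 ∨ 0 ≤ ν x) → (y = 0 ∨ 0 ≤ ν y) → ρ (x * y) = ρ x * ρ y
  ρ_one : ρ 1 = 1
  ρ_surj : ∀ u : k, ∃ x : F, (x = 0 ∨ 0 ≤ ν x) ∧ ρ x = u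
  ρ_eq_zero : ∀ x : F, (x = 0 ∨ 0 ≤ ν x) → (ρ x = 0 ↔ (x = 0 ∨ 0 < ν x))

namespace LiftSetup

variable {Γ F k : Type*} [AddCommGroup Γ] [LinearOrder Γ] [IsOrderedAddMonoid Γ] [Field F] [Field k]
variable (S : LiftSetup Γ F k)

/-- The ring of integers `O_F` of the valuation. -/
def integers : Set F := {x | x = 0 ∨ 0 ≤ S.ν x}

/-- The translated fractional ideal `a + t(γ)O_F`. -/
def fracIdeal (a : F) (γ : Γ) : Set F := {x | (x - a) * S.t (-γ) ∈ S.integers}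

/-- The lift `f^{a,γ}` of a function `f` on the residue field `k`:
`f^{a,γ}(x) = f(ρ((x-a)t(-γ)))` for `x ∈ a + t(γ)O_F` and `0` otherwise. -/
def lift {A : Type*} [Zero A] (f : k → A) (a : F) (γ : Γ) : F → A :=
  (S.fracIdeal a γ).indicator fun x => f (S.ρ ((x - a) * S.t (-γ)))

/-- The homomorphism `η : F^× → k^×`, `x ↦ ρ(x t(-ν x))`. -/
def η (x : F) : k := S.ρ (x * S.t (-S.ν x))

end LiftSetup


namespace LiftSetup

variable {Γ F k : Type*} [AddCommGroup Γ] [LinearOrder Γ] [IsOrderedAddMonoid Γ] [Field F] [Field k]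
variable (S : LiftSetup Γ F k)

lemma ν_one' : S.ν 1 = 0 := by
  have h := S.ν_mul 1 1 one_ne_zero one_ne_zero
  rw [mul_one] at h
  have h2 : S.ν 1 + 0 = S.ν 1 + S.ν 1 := by rw [add_zero]; exact h
  exact (add_left_cancel h2).symm

lemma ν_neg_one' : S.ν (-1 : F) = 0 := by
  have h := S.ν_mul (-1) (-1) (by norm_num) (by norm_num)
  rw [neg_mul_neg, one_mul, S.ν_one'] at h
  rcases lt_trichotomy (S.ν (-1 : F)) 0 with hl | he | hg
  · have := add_lt_add hl hl
    rw [← h, add_zero] at this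
    exact absurd this (lt_irrefl _)
  · exact he
  · have := add_lt_add hg hg
    rw [← h, add_zero] at this
    exact absurd this (lt_irrefl _)

lemma ν_neg' (x : F) (hx : x ≠ 0) : S.ν (-x) = S.ν x := by
  have h := S.ν_mul (-1) x (by norm_num) hx
  rw [neg_one_mul, S.ν_neg_one', zero_add] at h
  exact h

lemma t_zero' : S.t 0 = 1 := by
  have h := S.t_add 0 0
  rw [add_zero] at h
  have h2 : S.t 0 * 1 = S.t 0 * S.t 0 := by rw [mul_one]; exact h
  exact (mul_left_cancel₀ (S.t_ne 0) h2).symm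

lemma t_mul_t_neg' (γ : Γ) : S.t γ * S.t (-γ) = 1 := by
  rw [← S.t_add, add_neg_cancel, S.t_zero']

lemma mem_fracIdeal_iff' {x a : F} {γ : Γ} :
    x ∈ S.fracIdeal a γ ↔ x = a ∨ γ ≤ S.ν (x - a) := by
  unfold fracIdeal integers
  simp only [Set.mem_setOf_eq]
  by_cases hxa : x = a
  · simp [hxa]
  · have hsub : x - a ≠ 0 := sub_ne_zero.mpr hxa
    have hmul : (x - a) * S.t (-γ) ≠ 0 := mul_ne_zero hsub (S.t_ne _)
    rw [S.ν_mul _ _ hsub (S.t_ne _), S.ν_t]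
    constructor
    · rintro (h | h)
      · exact absurd h hmul
      · right; rwa [← sub_eq_add_neg, sub_nonneg] at h
    · rintro (h | h)
      · exact absurd h hxa
      · right; rwa [← sub_eq_add_neg, sub_nonneg]

lemma self_mem' (a : F) (γ : Γ) : a ∈ S.fracIdeal a γ :=
  S.mem_fracIdeal_iff'.mpr (Or.inl rfl)

lemma sub_val' {x y a : F} {γ : Γ} (hx : x ∈ S.fracIdeal a γ) (hy : y ∈ S.fracIdeal a γ) :
    x = y ∨ γ ≤ S.ν (x - y) := by
  by_cases hxy : x = y
  · exact Or.inl hxy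
  right
  rw [S.mem_fracIdeal_iff'] at hx hy
  by_cases hxa : x = a
  · have hya : y ≠ a := fun h => hxy (hxa.trans h.symm)
    have hy' : γ ≤ S.ν (y - a) := hy.resolve_left hya
    have heq : x - y = -(y - a) := by rw [hxa]; ring
    rw [heq, S.ν_neg' _ (sub_ne_zero.mpr hya)]
    exact hy'
  by_cases hya : y = a
  · have hx' : γ ≤ S.ν (x - a) := hx.resolve_left hxa
    have heq : x - y = x - a := by rw [hya]
    rw [heq]
    exact hx'
  have hx' := hx.resolve_left hxa
  have hy' := hy.resolve_left hya
  have hxa0 : x - a ≠ 0 := sub_ne_zero.mpr hxa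
  have hya0 : y - a ≠ 0 := sub_ne_zero.mpr hya
  have hkey : x - y = (x - a) + -(y - a) := by ring
  have hne : (x - a) + -(y - a) ≠ 0 := by rw [← hkey]; exact sub_ne_zero.mpr hxy
  have hmin := S.ν_add (x - a) (-(y - a)) hxa0 (neg_ne_zero.mpr hya0) hne
  rw [S.ν_neg' _ hya0] at hmin
  rw [hkey]
  exact le_trans (le_min hx' hy') hmin

lemma mem_symm' {x a : F} {γ : Γ} (h : x ∈ S.fracIdeal a γ) : a ∈ S.fracIdeal x γ := by
  by_cases hxa : x = a
  · rw [hxa]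
    exact S.self_mem' a γ
  rw [S.mem_fracIdeal_iff'] at h ⊢
  have h' := h.resolve_left hxa
  right
  have heq : a - x = -(x - a) := by ring
  rw [heq, S.ν_neg' _ (sub_ne_zero.mpr hxa)]
  exact h'

lemma frac_subset' {x a : F} {γ δ : Γ} (h : x ∈ S.fracIdeal a γ) (hδ : δ ≤ γ) :
    S.fracIdeal a γ ⊆ S.fracIdeal x δ := by
  intro y hy
  rw [S.mem_fracIdeal_iff']
  rcases S.sub_val' hy h with h1 | h1
  · exact Or.inl h1
  · exact Or.inr (le_trans hδ h1)

lemma frac_eq_of_mem' {x a : F} {γ : Γ} (h : x ∈ S.fracIdeal a γ) :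
    S.fracIdeal a γ = S.fracIdeal x γ :=
  Set.Subset.antisymm (S.frac_subset' h le_rfl) (S.frac_subset' (S.mem_symm' h) le_rfl)

lemma mem_integers_of_mem' {x a : F} {γ : Γ} (h : x ∈ S.fracIdeal a γ) :
    (x - a) * S.t (-γ) = 0 ∨ 0 ≤ S.ν ((x - a) * S.t (-γ)) := h

lemma res_eq' {x y a : F} {γ : Γ} (hx : x ∈ S.fracIdeal a γ) (hy : y ∈ S.fracIdeal a γ)
    (h : x = y ∨ γ < S.ν (x - y)) :
    S.ρ ((x - a) * S.t (-γ)) = S.ρ ((y - a) * S.t (-γ)) := by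
  by_cases hxy : x = y
  · rw [hxy]
  have h' : γ < S.ν (x - y) := h.resolve_left hxy
  have hxy0 : x - y ≠ 0 := sub_ne_zero.mpr hxy
  have hmem : (x - y) * S.t (-γ) = 0 ∨ 0 ≤ S.ν ((x - y) * S.t (-γ)) := by
    right
    rw [S.ν_mul _ _ hxy0 (S.t_ne _), S.ν_t, ← sub_eq_add_neg, sub_nonneg]
    exact h'.le
  have hpos : 0 < S.ν ((x - y) * S.t (-γ)) := by
    rw [S.ν_mul _ _ hxy0 (S.t_ne _), S.ν_t, ← sub_eq_add_neg, sub_pos]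
    exact h'
  have hzero : S.ρ ((x - y) * S.t (-γ)) = 0 :=
    (S.ρ_eq_zero _ hmem).mpr (Or.inr hpos)
  have hkey : (x - a) * S.t (-γ) = (y - a) * S.t (-γ) + (x - y) * S.t (-γ) := by ring
  rw [hkey, S.ρ_add _ _ (S.mem_integers_of_mem' hy) hmem, hzero, add_zero]

lemma res_surj' (a : F) (γ : Γ) (u : k) :
    ∃ x ∈ S.fracIdeal a γ, S.ρ ((x - a) * S.t (-γ)) = u := by
  obtain ⟨w, hw, hwu⟩ := S.ρ_surj u
  refine ⟨a + S.t γ * w, ?_, ?_⟩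
  · show (a + S.t γ * w - a) * S.t (-γ) ∈ S.integers
    have heq : (a + S.t γ * w - a) * S.t (-γ) = w * (S.t γ * S.t (-γ)) := by ring
    rw [heq, S.t_mul_t_neg', mul_one]
    exact hw
  · have heq : (a + S.t γ * w - a) * S.t (-γ) = w * (S.t γ * S.t (-γ)) := by ring
    rw [heq, S.t_mul_t_neg', mul_one]
    exact hwu

lemma lift_apply_mem' {A : Type*} [Zero A] (f : k → A) {x a : F} {γ : Γ}
    (h : x ∈ S.fracIdeal a γ) :
    S.lift f a γ x = f (S.ρ ((x - a) * S.t (-γ))) := Set.indicator_of_mem h _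

lemma lift_apply_not_mem' {A : Type*} [Zero A] (f : k → A) {x a : F} {γ : Γ}
    (h : x ∉ S.fracIdeal a γ) :
    S.lift f a γ x = 0 := Set.indicator_of_notMem h _

end LiftSetup

/-- The spaces of lifted functions associated to distinct translated
fractional ideals are linearly independent: if `J₁, …, Jₙ` are pairwise distinct translated
fractional ideals, `Jᵢ = aᵢ + t(γᵢ)O_F`, and `f₁, …, fₙ ∈ 𝓛` satisfy
`∑ i, fᵢ^{aᵢ,γᵢ} = 0` as a function on `F`, then every `fᵢ = 0`.  Here `𝓛` is a complex
space of complex-valued functions on the residue field `k`, closed under translation and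
containing no nonzero constant function. -/
theorem statement0
    {Γ F k : Type*} [AddCommGroup Γ] [LinearOrder Γ] [IsOrderedAddMonoid Γ] [Field F] [Field k]
    (S : LiftSetup Γ F k)
    (𝓛 : Submodule ℂ (k → ℂ))
    (h𝓛trans : ∀ f ∈ 𝓛, ∀ c : k, (fun u => f (u + c)) ∈ 𝓛)
    (h𝓛const : ∀ c : ℂ, (fun _ : k => c) ∈ 𝓛 → c = 0)
    (n : ℕ) (a : Fin n → F) (γ : Fin n → Γ) (f : Fin n → (k → ℂ))
    (hf : ∀ i, f i ∈ 𝓛)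
    (hdistinct : ∀ i j, i ≠ j → S.fracIdeal (a i) (γ i) ≠ S.fracIdeal (a j) (γ j))
    (hsum : ∑ i, S.lift (f i) (a i) (γ i) = 0) :
    ∀ i, f i = 0 := by
  have key : ∀ s : Finset (Fin n),
      (∀ x : F, ∑ j ∈ s, S.lift (f j) (a j) (γ j) x = 0) → ∀ i ∈ s, f i = 0 := by
    intro s
    induction s using Finset.strongInduction with
    | _ s ih =>
      intro hsum0 i hi
      obtain ⟨m, hm, hmax⟩ := Finset.exists_max_image s γ ⟨i, hi⟩
      have hfm : f m = 0 := by
        have hconst : ∀ u v : k, f m u = f m v := by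
          intro u v
          obtain ⟨x, hx, hxu⟩ := S.res_surj' (a m) (γ m) u
          obtain ⟨y, hy, hyv⟩ := S.res_surj' (a m) (γ m) v
          have hsame : ∀ j ∈ s.erase m,
              S.lift (f j) (a j) (γ j) x = S.lift (f j) (a j) (γ j) y := by
            intro j hj
            have hjm : j ≠ m := Finset.ne_of_mem_erase hj
            have hjs : j ∈ s := Finset.mem_of_mem_erase hj
            have hγ : γ j ≤ γ m := hmax j hjs
            have hfrom_mem : ∀ z : F, z ∈ S.fracIdeal (a j) (γ j) → z ∈ S.fracIdeal (a m) (γ m) →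
                S.fracIdeal (a m) (γ m) ⊆ S.fracIdeal (a j) (γ j) := by
              intro z hzj hzm
              calc S.fracIdeal (a m) (γ m) = S.fracIdeal z (γ m) := S.frac_eq_of_mem' hzm
                _ ⊆ S.fracIdeal z (γ j) := S.frac_subset' (S.self_mem' z (γ m)) hγ
                _ = S.fracIdeal (a j) (γ j) := (S.frac_eq_of_mem' hzj).symm
            have hlt : ∀ z : F, z ∈ S.fracIdeal (a j) (γ j) → z ∈ S.fracIdeal (a m) (γ m) →
                γ j < γ m := by
              intro z hzj hzm
              rcases hγ.lt_or_eq with h | h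
              · exact h
              exfalso
              apply hdistinct j m hjm
              rw [S.frac_eq_of_mem' hzj, S.frac_eq_of_mem' hzm, h]
            by_cases hxJ : x ∈ S.fracIdeal (a j) (γ j)
            · have hsub := hfrom_mem x hxJ hx
              have hyJ : y ∈ S.fracIdeal (a j) (γ j) := hsub hy
              have hlt' := hlt x hxJ hx
              rw [S.lift_apply_mem' _ hxJ, S.lift_apply_mem' _ hyJ]
              congr 1
              apply S.res_eq' hxJ hyJ
              rcases S.sub_val' hx hy with h | h
              · exact Or.inl h
              · exact Or.inr (lt_of_lt_of_le hlt' h)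
            · have hyJ : y ∉ S.fracIdeal (a j) (γ j) := by
                intro hyJ
                exact hxJ ((hfrom_mem y hyJ hy) hx)
              rw [S.lift_apply_not_mem' _ hxJ, S.lift_apply_not_mem' _ hyJ]
          have hsx := hsum0 x
          have hsy := hsum0 y
          rw [← Finset.add_sum_erase _ _ hm] at hsx hsy
          rw [Finset.sum_congr rfl hsame] at hsx
          have hlift : S.lift (f m) (a m) (γ m) x = S.lift (f m) (a m) (γ m) y := by
            have := hsx.trans hsy.symm
            exact add_right_cancel this
          rw [S.lift_apply_mem' _ hx, S.lift_apply_mem' _ hy, hxu, hyv] at hlift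
          exact hlift
        have hfmconst : f m = fun _ => f m 0 := funext fun u => hconst u 0
        have h0 : f m 0 = 0 := h𝓛const (f m 0) (hfmconst ▸ hf m)
        rw [hfmconst, h0]
        rfl
      by_cases him : i = m
      · exact him ▸ hfm
      · apply ih (s.erase m) (Finset.erase_ssubset hm)
        · intro x
          have hs := hsum0 x
          rw [← Finset.add_sum_erase _ _ hm] at hs
          have : S.lift (f m) (a m) (γ m) x = 0 := by
            unfold LiftSetup.lift
            rw [hfm]
            simp
          rw [this, zero_add] at hs
          exact hs
        · exact Finset.mem_erase.mpr ⟨him, hi⟩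
  intro i
  apply key Finset.univ _ i (Finset.mem_univ i)
  intro x
  have := congrFun hsum x
  rw [Finset.sum_apply] at this
  exact this
end
end

section
/- Let g be a complex-valued Haar-integrable function on k, let a, b ∈ F and γ ∈ Γ, and set f = g^{a,γ}·ψ_b ∈ 𝓛(F,ψ). Then the Fourier transform f̂(x) := ∫^F f(y)ψ(xy) dy satisfies f̂ = ψ(ab)·(ĝ)^{−b,−γ}·ψ_a·X^γ, where ĝ(v) = ∫_k g(u)ψ̄(uv) du is the Fourier transform of g on k with respect to the induced character ψ̄. -/
noncomputable section

open MeasureTheory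

section CGamma

variable (Γ : Type*) [AddCommGroup Γ] [LinearOrder Γ] [IsOrderedAddMonoid Γ]

instance : IsDomain (AddMonoidAlgebra ℂ Γ) := NoZeroDivisors.to_isDomain _

/-- `ℂ(Γ)`: the field of fractions of the complex group algebra of `Γ`. -/
abbrev CGamma : Type _ := FractionRing (AddMonoidAlgebra ℂ Γ)

/-- The canonical embedding `ℂ → ℂ(Γ)`. -/
def embC : ℂ →+* CGamma Γ :=
  (algebraMap (AddMonoidAlgebra ℂ Γ) (CGamma Γ)).comp AddMonoidAlgebra.singleZeroRingHom

variable {Γ}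

/-- The basis element `X^γ` of `ℂ(Γ)`. -/
def Xp (γ : Γ) : CGamma Γ :=
  algebraMap (AddMonoidAlgebra ℂ Γ) (CGamma Γ) (AddMonoidAlgebra.single γ 1)

end CGamma

section GoodChar

variable {Γ F k : Type*} [AddCommGroup Γ] [LinearOrder Γ] [IsOrderedAddMonoid Γ] [Field F] [Field k] [TopologicalSpace k]

/-- `ψ` is a nontrivial good character of `F` of conductor `𝔣`: a homomorphism from the
additive group of `F` to the complex unit circle, trivial on `t(𝔣)O_F`, nontrivial on
`t(𝔣-1)O_F`, whose induced map `ψ̄` on the residue field `k` (given by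
`ψ̄(ρ(x)) = ψ(t(𝔣-1)x)` for `x ∈ O_F`) is well defined and continuous. -/
def LiftSetup.IsGoodCharacter (S : LiftSetup Γ F k) (ψ : F → ℂ) (𝔣 : Γ) : Prop :=
  (∀ x y : F, ψ (x + y) = ψ x * ψ y) ∧
  (∀ x : F, ‖ψ x‖ = 1) ∧
  (∀ x ∈ S.integers, ψ (S.t 𝔣 * x) = 1) ∧
  (∃ x ∈ S.integers, ψ (S.t (𝔣 - S.one) * x) ≠ 1) ∧
  (∃ ψbar : k → ℂ, Continuous ψbar ∧
    ∀ x ∈ S.integers, ψbar (S.ρ x) = ψ (S.t (𝔣 - S.one) * x))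

end GoodChar

section LFmu

variable {Γ F k : Type*} [AddCommGroup Γ] [LinearOrder Γ] [IsOrderedAddMonoid Γ] [Field F] [Field k]
  [MeasurableSpace k]

open MeasureTheory

/-- `𝓛(F)`: the `ℂ(Γ)`-span of the lifts of Haar-integrable functions on `k`. -/
def LFmu (S : LiftSetup Γ F k) (μ : Measure k) : Submodule (CGamma Γ) (F → CGamma Γ) :=
  Submodule.span (CGamma Γ)
    {g | ∃ f : k → ℂ, Integrable f μ ∧ ∃ (a : F) (γ : Γ),
        g = S.lift (fun u => embC Γ (f u)) a γ}

theorem liftC_mem_mu (S : LiftSetup Γ F k) (μ : Measure k)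
    {f : k → ℂ} (hf : Integrable f μ) (a : F) (γ : Γ) :
    S.lift (fun u => embC Γ (f u)) a γ ∈ LFmu S μ :=
  Submodule.subset_span ⟨f, hf, a, γ, rfl⟩

/-- `𝓛^γ`: the complex span of the lifts of Haar-integrable functions at height `γ`. -/
def Lheight (S : LiftSetup Γ F k) (μ : Measure k) (γ : Γ) : Submodule ℂ (F → ℂ) :=
  Submodule.span ℂ {g | ∃ f : k → ℂ, Integrable f μ ∧ ∃ a : F, g = S.lift f a γ}

end LFmu

section LFpsi

variable {Γ F k : Type*} [AddCommGroup Γ] [LinearOrder Γ] [IsOrderedAddMonoid Γ] [Field F] [Field k]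
  [MeasurableSpace k]

open MeasureTheory

/-- `𝓛(F,ψ)`: the `ℂ(Γ)`-span of the functions `f·ψ_a` for `f ∈ 𝓛(F)`, `a ∈ F`. -/
def LFpsi (S : LiftSetup Γ F k) (μ : Measure k) (ψ : F → ℂ) :
    Submodule (CGamma Γ) (F → CGamma Γ) :=
  Submodule.span (CGamma Γ)
    {g | ∃ f ∈ LFmu S μ, ∃ a : F, g = fun x => embC Γ (ψ (a * x)) * f x}

end LFpsi

open scoped Classical in
/-- The Fourier transform on `F`: `f̂(x) = ∫^F f(y)ψ(xy) dy`, computed via the extended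
integral `Jext` on `𝓛(F,ψ)` (and defined to be `0` where the integrand is not integrable). -/
noncomputable def fourierF {Γ F k : Type*} [AddCommGroup Γ] [LinearOrder Γ] [IsOrderedAddMonoid Γ] [Field F] [Field k]
    [MeasurableSpace k] (S : LiftSetup Γ F k) (μ : MeasureTheory.Measure k) (ψ : F → ℂ)
    (Jext : LFpsi S μ ψ →ₗ[CGamma Γ] CGamma Γ) (f : F → CGamma Γ) : F → CGamma Γ :=
  fun x =>
    if hm : (fun y => f y * embC Γ (ψ (x * y))) ∈ LFpsi S μ ψ then Jext ⟨_, hm⟩ else 0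

section Aux

variable {Γ F k : Type*} [AddCommGroup Γ] [LinearOrder Γ] [IsOrderedAddMonoid Γ] [Field F] [Field k]
variable (S : LiftSetup Γ F k)

lemma aux_t_zero : S.t 0 = 1 := by
  have h := S.t_add 0 0
  rw [add_zero] at h
  nth_rewrite 1 [← mul_one (S.t 0)] at h
  exact (mul_left_cancel₀ (S.t_ne 0) h).symm

lemma aux_t_mul_t_neg (γ : Γ) : S.t γ * S.t (-γ) = 1 := by
  rw [← S.t_add, add_neg_cancel, aux_t_zero]

lemma aux_ν_one : S.ν 1 = 0 := by
  have h := S.ν_mul 1 1 one_ne_zero one_ne_zero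
  rw [mul_one] at h
  nth_rewrite 1 [← add_zero (S.ν 1)] at h
  exact (add_left_cancel h).symm

lemma aux_ν_neg {x : F} (hx : x ≠ 0) : S.ν (-x) = S.ν x := by
  have h1 : S.ν (-1 : F) = 0 := by
    have h := S.ν_mul (-1) (-1) (by norm_num) (by norm_num)
    rw [neg_mul_neg, one_mul, aux_ν_one] at h
    rcases lt_trichotomy (S.ν (-1 : F)) 0 with hlt | heq | hgt
    · exact absurd h.symm (ne_of_lt (add_neg hlt hlt))
    · exact heq
    · exact absurd h.symm (ne_of_gt (add_pos hgt hgt))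
  have h2 := S.ν_mul (-1) x (by norm_num) hx
  rw [neg_one_mul, h1, zero_add] at h2
  exact h2

lemma aux_ν_t_mul {x : F} (hx : x ≠ 0) (γ : Γ) : S.ν (x * S.t γ) = S.ν x + γ := by
  rw [S.ν_mul x _ hx (S.t_ne γ), S.ν_t]

lemma aux_mem_int_mul {x y : F} (hx : x ∈ S.integers) (hy : y ∈ S.integers) :
    x * y ∈ S.integers := by
  rcases hx with hx | hx
  · exact Or.inl (by rw [hx, zero_mul])
  rcases hy with hy | hy
  · exact Or.inl (by rw [hy, mul_zero])
  by_cases hx0 : x = 0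
  · exact Or.inl (by rw [hx0, zero_mul])
  by_cases hy0 : y = 0
  · exact Or.inl (by rw [hy0, mul_zero])
  exact Or.inr (by rw [S.ν_mul x y hx0 hy0]; exact add_nonneg hx hy)

lemma aux_mem_int_add {x y : F} (hx : x ∈ S.integers) (hy : y ∈ S.integers) :
    x + y ∈ S.integers := by
  rcases hx with hx | hx
  · rw [hx, zero_add]; exact hy
  rcases hy with hy | hy
  · rw [hy, add_zero]; exact Or.inr hx
  by_cases hx0 : x = 0
  · rw [hx0, zero_add]; exact Or.inr hy
  by_cases hy0 : y = 0
  · rw [hy0, add_zero]; exact Or.inr hx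
  by_cases hxy : x + y = 0
  · exact Or.inl hxy
  exact Or.inr (le_trans (le_min hx hy) (S.ν_add x y hx0 hy0 hxy))

lemma aux_ρ_zero : S.ρ (0 : F) = 0 :=
  (S.ρ_eq_zero 0 (Or.inl rfl)).mpr (Or.inl rfl)

/-- Adding an element of positive valuation preserves membership in the integers. -/
lemma aux_add_small_mem {e : F} (he : e ≠ 0) (hν : 0 < S.ν e) (s : F) :
    s + e ∈ S.integers ↔ s ∈ S.integers := by
  constructor
  · intro hs
    by_cases hs0 : s = 0
    · exact Or.inl hs0
    by_cases hse : s + e = 0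
    · have : s = -e := by linear_combination hse
      exact Or.inr (by rw [this, aux_ν_neg S he]; exact le_of_lt hν)
    have hkey := S.ν_add (s + e) (-e) hse (neg_ne_zero.mpr he)
    rw [add_neg_cancel_right] at hkey
    rcases hs with hs | hs
    · exact absurd hs hse
    refine Or.inr (le_trans ?_ (hkey hs0))
    rw [aux_ν_neg S he]
    exact le_min hs (le_of_lt hν)
  · intro hs
    exact aux_mem_int_add S hs (Or.inr (le_of_lt hν))

lemma aux_ρ_add_small {e : F} (he : e ≠ 0) (hν : 0 < S.ν e) {s : F}
    (hs : s ∈ S.integers) : S.ρ (s + e) = S.ρ s := by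
  rw [S.ρ_add s e hs (Or.inr (le_of_lt hν)),
    (S.ρ_eq_zero e (Or.inr (le_of_lt hν))).mpr (Or.inr hν), add_zero]

/-- Lifts are invariant under translation by elements of large valuation. -/
lemma aux_lift_shift {A : Type*} [Zero A] (f : k → A) (a : F) (γ : Γ) {τ : F}
    (hτ : τ ≠ 0) (hν : γ < S.ν τ) (y : F) :
    S.lift f a γ (y + τ) = S.lift f a γ y := by
  have he : τ * S.t (-γ) ≠ 0 := mul_ne_zero hτ (S.t_ne _)
  have hνe : 0 < S.ν (τ * S.t (-γ)) := by
    rw [aux_ν_t_mul S hτ, ← sub_eq_add_neg]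
    exact sub_pos.mpr hν
  have harg : (y + τ - a) * S.t (-γ) = (y - a) * S.t (-γ) + τ * S.t (-γ) := by ring
  have hmem : (y + τ ∈ S.fracIdeal a γ) ↔ (y ∈ S.fracIdeal a γ) := by
    unfold LiftSetup.fracIdeal
    simp only [Set.mem_setOf_eq, harg]
    exact aux_add_small_mem S he hνe _
  unfold LiftSetup.lift
  by_cases hy : y ∈ S.fracIdeal a γ
  · rw [Set.indicator_of_mem (hmem.mpr hy), Set.indicator_of_mem hy, harg,
      aux_ρ_add_small S he hνe hy]
  · rw [Set.indicator_of_notMem (fun h => hy (hmem.mp h)), Set.indicator_of_notMem hy]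

end Aux

open MeasureTheory in
/-- For `f = g^{a,γ}·ψ_b` with `g` Haar integrable on `k`, the Fourier
transform of `f` satisfies `f̂ = ψ(ab)·(ĝ)^{-b,-γ}·ψ_a·X^γ`, where `ĝ` is the Fourier
transform of `g` on `k` with respect to the induced character `ψ̄`. -/
theorem statement6
    {Γ F k : Type*} [AddCommGroup Γ] [LinearOrder Γ] [IsOrderedAddMonoid Γ] [Field F] [Field k]
    [TopologicalSpace k] [IsTopologicalRing k] [LocallyCompactSpace k]
    [MeasurableSpace k] [BorelSpace k]
    (hk_nondiscrete : ¬ IsOpen ({0} : Set k))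
    (μ : Measure k) [μ.IsAddHaarMeasure]
    (S : LiftSetup Γ F k)
    (ψ : F → ℂ) (hψ : S.IsGoodCharacter ψ S.one)
    (ψbar : k → ℂ) (hψbar_cont : Continuous ψbar)
    (hψbar : ∀ x ∈ S.integers, ψbar (S.ρ x) = ψ x)
    (Jext : LFpsi S μ ψ →ₗ[CGamma Γ] CGamma Γ)
    (hJext : ∀ (f : k → ℂ) (hf : Integrable f μ) (a : F) (γ : Γ)
      (hmem : S.lift (fun u => embC Γ (f u)) a γ ∈ LFpsi S μ ψ),
      Jext ⟨S.lift (fun u => embC Γ (f u)) a γ, hmem⟩ = embC Γ (∫ u, f u ∂μ) * Xp γ)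
    (hJinv : ∀ (g : F → CGamma Γ) (hg : g ∈ LFpsi S μ ψ) (τ : F)
      (hg' : (fun x => g (x + τ)) ∈ LFpsi S μ ψ),
      Jext ⟨fun x => g (x + τ), hg'⟩ = Jext ⟨g, hg⟩)
    (g : k → ℂ) (hg : Integrable g μ) (a b : F) (γ : Γ) :
    fourierF S μ ψ Jext
        (fun y => embC Γ (ψ (b * y)) * S.lift (fun u => embC Γ (g u)) a γ y)
      = fun x => embC Γ (ψ (a * b)) * embC Γ (ψ (a * x)) *
          S.lift (fun v => embC Γ (∫ u, g u * ψbar (u * v) ∂μ)) (-b) (-γ) x * Xp γ := by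
  obtain ⟨hψadd, hψabs, -, hψnontriv, -⟩ := hψ
  have hψ0 : ψ 0 = 1 := by
    have h := hψadd 0 0
    rw [add_zero] at h
    have hne : ψ 0 ≠ 0 := by
      intro hc
      have := hψabs 0
      rw [hc] at this
      simp at this
    nth_rewrite 1 [← mul_one (ψ 0)] at h
    exact (mul_left_cancel₀ hne h).symm
  have hembinj : Function.Injective (embC Γ) := (embC Γ).injective
  have hψbar_abs : ∀ v : k, ‖ψbar v‖ = 1 := by
    intro v
    obtain ⟨z, hzint, hz⟩ := S.ρ_surj v
    rw [← hz, hψbar z hzint]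
    exact hψabs z
  have hliftpsi : ∀ (f : k → ℂ), Integrable f μ → ∀ (a' : F) (γ' : Γ),
      S.lift (fun u => embC Γ (f u)) a' γ' ∈ LFpsi S μ ψ := by
    intro f hf a' γ'
    refine Submodule.subset_span ⟨_, liftC_mem_mu S μ hf a' γ', 0, ?_⟩
    funext y
    rw [zero_mul, hψ0, map_one, one_mul]
  funext x
  set c := x + b with hc
  have hFc : (fun y => (embC Γ (ψ (b * y)) * S.lift (fun u => embC Γ (g u)) a γ y) *
      embC Γ (ψ (x * y)))
      = fun y => embC Γ (ψ (c * y)) * S.lift (fun u => embC Γ (g u)) a γ y := by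
    funext y
    have hsplit : ψ (c * y) = ψ (b * y) * ψ (x * y) := by
      rw [hc, show (x + b) * y = b * y + x * y by ring, hψadd]
    rw [hsplit, map_mul]
    ring
  simp only [fourierF]
  rw [hFc]
  have hm : (fun y => embC Γ (ψ (c * y)) * S.lift (fun u => embC Γ (g u)) a γ y)
      ∈ LFpsi S μ ψ :=
    Submodule.subset_span ⟨_, liftC_mem_mu S μ hg a γ, c, rfl⟩
  rw [dif_pos hm]
  by_cases hw : c * S.t γ ∈ S.integers
  · -- Case A : x ∈ -b + t(-γ)O_F
    set h : k → ℂ := fun u => g u * ψbar (S.ρ (c * S.t γ) * u) with hhdef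
    have hhint : Integrable h μ := by
      have hcont : Continuous fun u : k => ψbar (S.ρ (c * S.t γ) * u) :=
        hψbar_cont.comp (continuous_const.mul continuous_id)
      have hbdd := hg.bdd_mul hcont.aestronglyMeasurable
        (c := 1) (Filter.Eventually.of_forall fun u => le_of_eq (hψbar_abs _))
      have : h = fun u => ψbar (S.ρ (c * S.t γ) * u) * g u := by
        funext u; rw [hhdef]; ring
      rw [this]
      exact hbdd
    have hFceq : (fun y => embC Γ (ψ (c * y)) * S.lift (fun u => embC Γ (g u)) a γ y)
        = fun y => embC Γ (ψ (c * a)) * S.lift (fun u => embC Γ (h u)) a γ y := by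
      funext y
      by_cases hy : y ∈ S.fracIdeal a γ
      · have hu' : (y - a) * S.t (-γ) ∈ S.integers := hy
        have hkey : c * y = c * a + (c * S.t γ) * ((y - a) * S.t (-γ)) := by
          have ht := aux_t_mul_t_neg S γ
          calc c * y = c * a + c * (y - a) * (S.t γ * S.t (-γ)) := by rw [ht]; ring
          _ = c * a + (c * S.t γ) * ((y - a) * S.t (-γ)) := by ring
        have hval : ψ ((c * S.t γ) * ((y - a) * S.t (-γ)))
            = ψbar (S.ρ (c * S.t γ) * S.ρ ((y - a) * S.t (-γ))) := by
          rw [← S.ρ_mul _ _ hw hu', hψbar _ (aux_mem_int_mul S hw hu')]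
        unfold LiftSetup.lift
        rw [Set.indicator_of_mem hy, Set.indicator_of_mem hy, hkey, hψadd, hval, hhdef]
        simp only [map_mul]
        ring
      · unfold LiftSetup.lift
        rw [Set.indicator_of_notMem hy, Set.indicator_of_notMem hy, mul_zero, mul_zero]
    have hLmem := hliftpsi h hhint a γ
    have hsub : (⟨fun y => embC Γ (ψ (c * y)) * S.lift (fun u => embC Γ (g u)) a γ y, hm⟩ :
        LFpsi S μ ψ)
        = embC Γ (ψ (c * a)) • ⟨S.lift (fun u => embC Γ (h u)) a γ, hLmem⟩ := by
      apply Subtype.ext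
      refine hFceq.trans ?_
      funext y
      simp [smul_eq_mul]
    rw [hsub, LinearMap.map_smul, hJext h hhint a γ hLmem, smul_eq_mul]
    have hmemx : x ∈ S.fracIdeal (-b) (-γ) := by
      show (x - -b) * S.t (-(-γ)) ∈ S.integers
      rw [sub_neg_eq_add, neg_neg, ← hc]
      exact hw
    have hliftval : S.lift (fun v => embC Γ (∫ u, g u * ψbar (u * v) ∂μ)) (-b) (-γ) x
        = embC Γ (∫ u, g u * ψbar (u * S.ρ ((x - -b) * S.t (-(-γ)))) ∂μ) :=
      Set.indicator_of_mem hmemx _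
    rw [hliftval]
    have hρarg : S.ρ ((x - -b) * S.t (-(-γ))) = S.ρ (c * S.t γ) := by
      rw [sub_neg_eq_add, neg_neg, ← hc]
    rw [hρarg]
    have hintegral : (∫ u, h u ∂μ) = ∫ u, g u * ψbar (u * S.ρ (c * S.t γ)) ∂μ := by
      congr 1
      funext u
      show g u * ψbar (S.ρ (c * S.t γ) * u) = g u * ψbar (u * S.ρ (c * S.t γ))
      rw [mul_comm (S.ρ (c * S.t γ)) u]
    have hca : ψ (c * a) = ψ (a * b) * ψ (a * x) := by
      rw [hc, show (x + b) * a = a * b + a * x by ring, hψadd]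
    rw [hintegral, hca, map_mul]
    ring
  · -- Case B : x ∉ -b + t(-γ)O_F
    have hc0 : c ≠ 0 := by
      intro h0
      exact hw (Or.inl (by rw [h0, zero_mul]))
    have hνw : ¬ (0 ≤ S.ν c + γ) := by
      intro hle
      exact hw (Or.inr (by rw [aux_ν_t_mul S hc0 γ]; exact hle))
    obtain ⟨x₀, hx₀int, hx₀⟩ := hψnontriv
    rw [sub_self, aux_t_zero, one_mul] at hx₀
    have hx₀ne : x₀ ≠ 0 := by
      intro h0
      rw [h0, hψ0] at hx₀
      exact hx₀ rfl
    set τ := x₀ * c⁻¹ with hτdef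
    have hτne : τ ≠ 0 := mul_ne_zero hx₀ne (inv_ne_zero hc0)
    have hcτ : c * τ = x₀ := by
      rw [hτdef]
      field_simp
    have hνinv : S.ν c⁻¹ = -S.ν c := by
      have hh := S.ν_mul c c⁻¹ hc0 (inv_ne_zero hc0)
      rw [mul_inv_cancel₀ hc0, aux_ν_one] at hh
      rw [add_comm] at hh
      exact eq_neg_of_add_eq_zero_left hh.symm
    have hντ : γ < S.ν τ := by
      have hx₀pos : 0 ≤ S.ν x₀ := by
        rcases hx₀int with h0 | hpos
        · exact absurd h0 hx₀ne
        · exact hpos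
      have hγlt : γ < -S.ν c := by
        by_contra hle
        push_neg at hle
        refine hνw ?_
        calc (0 : Γ) = S.ν c + -S.ν c := (add_neg_cancel _).symm
          _ ≤ S.ν c + γ := add_le_add_right hle _
      calc γ < -S.ν c := hγlt
        _ ≤ S.ν x₀ + -S.ν c := le_add_of_nonneg_left hx₀pos
        _ = S.ν τ := by rw [hτdef, S.ν_mul _ _ hx₀ne (inv_ne_zero hc0), hνinv]
    set G := fun y => embC Γ (ψ (c * y)) * S.lift (fun u => embC Γ (g u)) a γ y with hGdef
    have hshift : (fun y => G (y + τ)) = embC Γ (ψ (c * τ)) • G := by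
      funext y
      have hmul : ψ (c * (y + τ)) = ψ (c * τ) * ψ (c * y) := by
        rw [mul_add, hψadd, mul_comm]
      simp only [hGdef, Pi.smul_apply, smul_eq_mul]
      rw [aux_lift_shift S _ a γ hτne hντ y, hmul, map_mul]
      ring
    have hm' : (fun y => G (y + τ)) ∈ LFpsi S μ ψ := by
      rw [hshift]
      exact Submodule.smul_mem _ _ hm
    have hsub2 : (⟨fun y => G (y + τ), hm'⟩ : LFpsi S μ ψ)
        = embC Γ (ψ (c * τ)) • ⟨G, hm⟩ := Subtype.ext hshift
    have hJeq := hJinv G hm τ hm'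
    rw [hsub2, LinearMap.map_smul, smul_eq_mul] at hJeq
    have hzero : Jext ⟨G, hm⟩ = 0 := by
      have hfac : (embC Γ (ψ (c * τ)) - 1) * Jext ⟨G, hm⟩ = 0 := by
        rw [sub_mul, one_mul, hJeq, sub_self]
      have hne1 : embC Γ (ψ (c * τ)) - 1 ≠ 0 := by
        rw [sub_ne_zero, hcτ]
        intro hcontra
        exact hx₀ (hembinj (by rw [hcontra, map_one]))
      exact (mul_eq_zero.mp hfac).resolve_left hne1
    have hnmemx : x ∉ S.fracIdeal (-b) (-γ) := by
      show ¬ ((x - -b) * S.t (-(-γ)) ∈ S.integers)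
      rw [sub_neg_eq_add, neg_neg, ← hc]
      exact hw
    have hrhs : embC Γ (ψ (a * b)) * embC Γ (ψ (a * x)) *
        S.lift (fun v => embC Γ (∫ u, g u * ψbar (u * v) ∂μ)) (-b) (-γ) x * Xp γ = 0 := by
      rw [show S.lift (fun v => embC Γ (∫ u, g u * ψbar (u * v) ∂μ)) (-b) (-γ) x = 0 from
        Set.indicator_of_notMem hnmemx _]
      ring
    exact hzero.trans hrhs.symm
end
end
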